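/- Fix real numbers a, b, s > 0 with a > sb. There exist a unique η₀ ∈ (1, 1+s) and a unique η₁ ∈ (1+s, +∞) such that H(x,0) < 0 for x ∈ (0, η₀) ∪ (η₁, +∞), H(η₀, 0) = H(η₁, 0) = 0, and H(x,0) > 0 for x ∈ (η₀, η₁). Moreover, ∂H/∂x(η₀, 0) > 0 and ∂H/∂x(η₁, 0) < 0. -/

import Mathlib

/-- The logarithm with values in `ℝ ∪ {±∞}`: `elog 0 = −∞`, and `elog x = log x` for `x > 0`. -/
noncomputable def elog (x : ℝ) : EReal := if x ≤ 0 then ⊥ else ((Real.log x : ℝ) : EReal)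

/-- The function
`H(x,y) = ((a+b)/2)·log(((x−1)²+y²)/((x+1)²+y²)) + (b/2)·log(((x+1+s)²+y²)/((x−1−s)²+y²))`,
with values in `ℝ ∪ {±∞}`. -/
noncomputable def Hfun (a b s x y : ℝ) : EReal :=
  (((a + b) / 2 : ℝ) : EReal) * (elog ((x - 1) ^ 2 + y ^ 2) - elog ((x + 1) ^ 2 + y ^ 2)) +
    ((b / 2 : ℝ) : EReal) * (elog ((x + 1 + s) ^ 2 + y ^ 2) - elog ((x - 1 - s) ^ 2 + y ^ 2))

open Real Filter Set Topology

noncomputable def hh (a b s x : ℝ) : ℝ :=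
  (a+b) * (Real.log (x-1) - Real.log (x+1)) + b * (Real.log (x+1+s) - Real.log (x-1-s))

noncomputable def hh' (a b s x : ℝ) : ℝ :=
  (a+b) * (1/(x-1) - 1/(x+1)) + b * (1/(x+1+s) - 1/(x-1-s))

lemma elog_of_pos {t : ℝ} (ht : 0 < t) : elog t = ((Real.log t : ℝ) : EReal) := by
  rw [elog, if_neg (not_le.2 ht)]

lemma sq_pos_of_ne {x : ℝ} (h : x ≠ 0) : 0 < x ^ 2 := by positivity

lemma Hfun_eq (a b s : ℝ) (hs : 0 < s) {x : ℝ} (hx0 : 0 < x) (hx1 : x ≠ 1) (hxs : x ≠ 1 + s) :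
    Hfun a b s x 0 = ((hh a b s x : ℝ) : EReal) := by
  have h1 : (x - 1) ≠ 0 := sub_ne_zero.2 hx1
  have h2 : (x + 1) ≠ 0 := by positivity
  have h3 : (x + 1 + s) ≠ 0 := by positivity
  have h4 : (x - 1 - s) ≠ 0 := by
    intro h; apply hxs; linarith [sub_eq_zero.1 (by linarith : x - (1+s) = 0)]
  simp only [Hfun, ne_eq, OfNat.ofNat_ne_zero, not_false_eq_true, zero_pow, add_zero]
  rw [elog_of_pos (sq_pos_of_ne h1), elog_of_pos (sq_pos_of_ne h2),
    elog_of_pos (sq_pos_of_ne h3), elog_of_pos (sq_pos_of_ne h4)]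
  rw [Real.log_pow, Real.log_pow, Real.log_pow, Real.log_pow]
  norm_cast
  rw [hh]; push_cast; ring

lemma elog_zero : elog 0 = ⊥ := by rw [elog]; simp

lemma Hfun_at_one (a b s : ℝ) (ha : 0 < a) (hb : 0 < b) (hs : 0 < s) :
    Hfun a b s 1 0 = ⊥ := by
  have h2 : (0:ℝ) < (1 + 1 : ℝ) ^ 2 := by norm_num
  have h3 : (0:ℝ) < (1 + 1 + s : ℝ) ^ 2 := by positivity
  have h4 : (0:ℝ) < (1 - 1 - s : ℝ) ^ 2 := sq_pos_of_ne (by intro h; nlinarith)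
  simp only [Hfun, ne_eq, OfNat.ofNat_ne_zero, not_false_eq_true, zero_pow, add_zero]
  have h1 : ((1:ℝ) - 1)^2 = 0 := by norm_num
  rw [h1, elog_zero, elog_of_pos h2, elog_of_pos h3, elog_of_pos h4,
    EReal.bot_sub, EReal.coe_mul_bot_of_pos (by linarith : (0:ℝ) < (a+b)/2), ← EReal.coe_sub,
    ← EReal.coe_mul, EReal.bot_add]

lemma Hfun_at_onePlus (a b s : ℝ) (ha : 0 < a) (hb : 0 < b) (hs : 0 < s) :
    Hfun a b s (1 + s) 0 = ⊤ := by
  have h1 : (0:ℝ) < (1 + s - 1 : ℝ) ^ 2 := sq_pos_of_ne (by intro h; nlinarith)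
  have h2 : (0:ℝ) < (1 + s + 1 : ℝ) ^ 2 := by positivity
  have h3 : (0:ℝ) < (1 + s + 1 + s : ℝ) ^ 2 := by positivity
  simp only [Hfun, ne_eq, OfNat.ofNat_ne_zero, not_false_eq_true, zero_pow, add_zero]
  have h4 : ((1:ℝ) + s - 1 - s)^2 = 0 := by ring_nf
  rw [h4, elog_zero, elog_of_pos h1, elog_of_pos h2, elog_of_pos h3,
    EReal.coe_sub_bot, EReal.mul_top_of_pos (by exact_mod_cast (by linarith : (0:ℝ) < b/2)),
    ← EReal.coe_sub, ← EReal.coe_mul, EReal.coe_add_top]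

lemma hasDerivAt_hh (a b s : ℝ) (hs : 0 < s) {x : ℝ} (hx0 : -1 < x) (hx1 : x ≠ 1)
    (hxs : x ≠ 1 + s) : HasDerivAt (hh a b s) (hh' a b s x) x := by
  have h1 : (x - 1) ≠ 0 := sub_ne_zero.2 hx1
  have h2 : (x + 1) ≠ 0 := by intro h; linarith [(by linarith : x = -1)]
  have h3 : (x + 1 + s) ≠ 0 := by intro h; nlinarith
  have h4 : (x - 1 - s) ≠ 0 := by intro h; apply hxs; linarith
  have d1 : HasDerivAt (fun y : ℝ => Real.log (y - 1)) (1/(x-1)) x := by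
    simpa [Function.comp_def] using (Real.hasDerivAt_log h1).comp x ((hasDerivAt_id x).sub_const 1)
  have d2 : HasDerivAt (fun y : ℝ => Real.log (y + 1)) (1/(x+1)) x := by
    simpa [Function.comp_def] using (Real.hasDerivAt_log h2).comp x ((hasDerivAt_id x).add_const 1)
  have d3 : HasDerivAt (fun y : ℝ => Real.log (y + 1 + s)) (1/(x+1+s)) x := by
    simpa [Function.comp_def] using (Real.hasDerivAt_log h3).comp x (((hasDerivAt_id x).add_const 1).add_const s)
  have d4 : HasDerivAt (fun y : ℝ => Real.log (y - 1 - s)) (1/(x-1-s)) x := by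
    simpa [Function.comp_def] using (Real.hasDerivAt_log h4).comp x (((hasDerivAt_id x).sub_const 1).sub_const s)
  exact ((d1.sub d2).const_mul (a+b)).add ((d3.sub d4).const_mul b)

lemma hh'_pos_mid (a b s : ℝ) (ha : 0 < a) (hb : 0 < b) (hs : 0 < s) {x : ℝ}
    (hx : x ∈ Set.Ioo (1:ℝ) (1+s)) : 0 < hh' a b s x := by
  obtain ⟨hx1, hx2⟩ := hx
  have p1 : (0:ℝ) < x - 1 := by linarith
  have p2 : (0:ℝ) < x + 1 := by linarith
  have p3 : (0:ℝ) < x + 1 + s := by linarith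
  have p4 : x - 1 - s < 0 := by linarith
  have e1 : 1/(x+1) < 1/(x-1) := by
    apply one_div_lt_one_div_of_lt p1; linarith
  have e2 : 1/(x-1-s) < 1/(x+1+s) := by
    have : 1/(x-1-s) < 0 := by exact div_neg_of_pos_of_neg one_pos p4
    have : (0:ℝ) < 1/(x+1+s) := by positivity
    linarith
  rw [hh']
  have : (0:ℝ) < a + b := by linarith
  nlinarith [mul_pos this (by linarith : (0:ℝ) < 1/(x-1) - 1/(x+1)),
    mul_pos hb (by linarith : (0:ℝ) < 1/(x+1+s) - 1/(x-1-s))]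

/-- the square of the unique critical point beyond `1+s` -/
noncomputable def Tc (a b s : ℝ) : ℝ := (1+s) * ((a+b)*(1+s) - b) / (a - s*b)

lemma Tc_gt (a b s : ℝ) (ha : 0 < a) (hb : 0 < b) (hs : 0 < s) (hsb : s * b < a) :
    (1+s)^2 < Tc a b s := by
  rw [Tc, lt_div_iff₀ (by linarith)]
  nlinarith [mul_pos (mul_pos (by linarith : (0:ℝ) < 1+s) hb) (by nlinarith : (0:ℝ) < s^2+2*s)]

lemma hh'_eq (a b s : ℝ) (hsb : s * b < a) {x : ℝ} (h1 : x - 1 ≠ 0) (h2 : x + 1 ≠ 0)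
    (h3 : x + 1 + s ≠ 0) (h4 : x - 1 - s ≠ 0) :
    hh' a b s x = 2*(a - s*b)*(x^2 - Tc a b s) / ((x^2-1)*(x^2-(1+s)^2)) := by
  have hd : a - s*b ≠ 0 := by linarith
  have hD : (x^2-1)*(x^2-(1+s)^2) ≠ 0 := by
    have e1 : x^2-1 = (x-1)*(x+1) := by ring
    have e2 : x^2-(1+s)^2 = (x-1-s)*(x+1+s) := by ring
    rw [e1, e2]
    exact mul_ne_zero (mul_ne_zero h1 h2) (mul_ne_zero h4 h3)
  rw [hh', Tc, eq_div_iff hD]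
  have e : 2*(a - s*b)*(x^2 - (1+s)*((a+b)*(1+s)-b)/(a-s*b)) = 2*((a-s*b)*x^2 - (1+s)*((a+b)*(1+s)-b)) := by
    field_simp
  rw [e]
  field_simp
  ring

lemma Xc_gt (a b s : ℝ) (ha : 0 < a) (hb : 0 < b) (hs : 0 < s) (hsb : s * b < a) :
    1 + s < Real.sqrt (Tc a b s) :=
  (Real.lt_sqrt (by linarith)).2 (Tc_gt a b s ha hb hs hsb)

lemma hh'_neg_tail (a b s : ℝ) (ha : 0 < a) (hb : 0 < b) (hs : 0 < s) (hsb : s * b < a)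
    {x : ℝ} (hx : x ∈ Set.Ioo (1+s) (Real.sqrt (Tc a b s))) : hh' a b s x < 0 := by
  obtain ⟨hx1, hx2⟩ := hx
  have hx0 : (0:ℝ) < x := by linarith
  have h1 : x - 1 ≠ 0 := by intro h; nlinarith
  have h2 : x + 1 ≠ 0 := by positivity
  have h3 : x + 1 + s ≠ 0 := by positivity
  have h4 : x - 1 - s ≠ 0 := by intro h; nlinarith
  rw [hh'_eq a b s hsb h1 h2 h3 h4]
  apply div_neg_of_neg_of_pos
  · have : x^2 < Tc a b s := (Real.lt_sqrt hx0.le).1 hx2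
    nlinarith
  · have q1 : (0:ℝ) < x^2 - (1+s)^2 := by nlinarith
    have q2 : (0:ℝ) < x^2 - 1 := by nlinarith
    exact mul_pos q2 q1

lemma hh'_pos_tail (a b s : ℝ) (ha : 0 < a) (hb : 0 < b) (hs : 0 < s) (hsb : s * b < a)
    {x : ℝ} (hx : Real.sqrt (Tc a b s) < x) : 0 < hh' a b s x := by
  have hXg := Xc_gt a b s ha hb hs hsb
  have hx1s : 1 + s < x := lt_trans hXg hx
  have hx0 : (0:ℝ) < x := by linarith
  have h1 : x - 1 ≠ 0 := by intro h; nlinarith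
  have h2 : x + 1 ≠ 0 := by positivity
  have h3 : x + 1 + s ≠ 0 := by positivity
  have h4 : x - 1 - s ≠ 0 := by intro h; nlinarith
  rw [hh'_eq a b s hsb h1 h2 h3 h4]
  apply div_pos
  · have : Tc a b s < x^2 := (Real.sqrt_lt' hx0).1 hx
    nlinarith
  · have q1 : (0:ℝ) < x^2 - (1+s)^2 := by nlinarith
    have q2 : (0:ℝ) < x^2 - 1 := by nlinarith
    exact mul_pos q2 q1

lemma strictMonoOn_hh_mid (a b s : ℝ) (ha : 0 < a) (hb : 0 < b) (hs : 0 < s) :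
    StrictMonoOn (hh a b s) (Set.Ioo 1 (1+s)) := by
  apply strictMonoOn_of_deriv_pos (convex_Ioo _ _)
  · intro x hx
    exact ((hasDerivAt_hh a b s hs (by linarith [hx.1]) (ne_of_gt hx.1)
      (ne_of_lt hx.2)).continuousAt).continuousWithinAt
  · intro x hx
    rw [interior_Ioo] at hx
    rw [(hasDerivAt_hh a b s hs (by linarith [hx.1]) (ne_of_gt hx.1) (ne_of_lt hx.2)).deriv]
    exact hh'_pos_mid a b s ha hb hs hx

lemma strictAntiOn_hh_tail (a b s : ℝ) (ha : 0 < a) (hb : 0 < b) (hs : 0 < s) (hsb : s * b < a) :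
    StrictAntiOn (hh a b s) (Set.Ioc (1+s) (Real.sqrt (Tc a b s))) := by
  apply strictAntiOn_of_deriv_neg (convex_Ioc _ _)
  · intro x hx
    have hx1 : 1 + s < x := hx.1
    exact ((hasDerivAt_hh a b s hs (by linarith) (by intro h; nlinarith)
      (ne_of_gt hx1)).continuousAt).continuousWithinAt
  · intro x hx
    rw [interior_Ioc] at hx
    have hx1 : 1 + s < x := hx.1
    rw [(hasDerivAt_hh a b s hs (by linarith) (by intro h; nlinarith) (ne_of_gt hx1)).deriv]
    exact hh'_neg_tail a b s ha hb hs hsb hx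

lemma strictMonoOn_hh_end (a b s : ℝ) (ha : 0 < a) (hb : 0 < b) (hs : 0 < s) (hsb : s * b < a) :
    StrictMonoOn (hh a b s) (Set.Ici (Real.sqrt (Tc a b s))) := by
  have hXg := Xc_gt a b s ha hb hs hsb
  apply strictMonoOn_of_deriv_pos (convex_Ici _)
  · intro x hx
    have hx1 : 1 + s < x := lt_of_lt_of_le hXg hx
    exact ((hasDerivAt_hh a b s hs (by linarith) (by intro h; nlinarith)
      (ne_of_gt hx1)).continuousAt).continuousWithinAt
  · intro x hx
    rw [interior_Ici] at hx
    have hx1 : 1 + s < x := lt_trans hXg hx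
    rw [(hasDerivAt_hh a b s hs (by linarith) (by intro h; nlinarith) (ne_of_gt hx1)).deriv]
    exact hh'_pos_tail a b s ha hb hs hsb hx

lemma tendsto_sub_gt (c : ℝ) : Filter.Tendsto (fun x => x - c) (𝓝[>] c) (𝓝[>] 0) := by
  have h1 : Filter.Tendsto (fun x : ℝ => x - c) (𝓝 c) (𝓝 0) := by
    have := ((continuous_id (X := ℝ)).sub (continuous_const (y := c))).tendsto c
    simpa [Pi.sub_def] using this
  apply tendsto_nhdsWithin_of_tendsto_nhds_of_eventually_within _ (h1.mono_left nhdsWithin_le_nhds)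
  exact eventually_mem_nhdsWithin.mono fun x hx => Set.mem_Ioi.2 (sub_pos.2 hx)

lemma tendsto_sub_lt (c : ℝ) : Filter.Tendsto (fun x => x - c) (𝓝[<] c) (𝓝[≠] 0) := by
  have h1 : Filter.Tendsto (fun x : ℝ => x - c) (𝓝 c) (𝓝 0) := by
    have := ((continuous_id (X := ℝ)).sub (continuous_const (y := c))).tendsto c
    simpa [Pi.sub_def] using this
  apply tendsto_nhdsWithin_of_tendsto_nhds_of_eventually_within _ (h1.mono_left nhdsWithin_le_nhds)
  exact eventually_mem_nhdsWithin.mono fun x hx => sub_ne_zero.2 (ne_of_lt hx)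

lemma contAt_log_shift {c d : ℝ} (h : c + d ≠ 0) :
    ContinuousAt (fun x : ℝ => Real.log (x + d)) c := by
  have h1 : ContinuousAt (fun x : ℝ => x + d) c := continuousAt_id.add continuousAt_const
  exact ContinuousAt.comp (g := Real.log) (f := fun x : ℝ => x + d) (Real.continuousAt_log h) h1

lemma tendsto_hh_one (a b s : ℝ) (ha : 0 < a) (hb : 0 < b) (hs : 0 < s) :
    Filter.Tendsto (hh a b s) (𝓝[>] 1) Filter.atBot := by
  have hf : Filter.Tendsto (fun x => (a+b) * Real.log (x - 1)) (𝓝[>] (1:ℝ)) Filter.atBot :=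
    Filter.Tendsto.const_mul_atBot (by linarith)
      (Real.tendsto_log_nhdsGT_zero.comp (tendsto_sub_gt 1))
  have hg : Filter.Tendsto
      (fun x => -((a+b) * Real.log (x+1)) + b * (Real.log (x+1+s) - Real.log (x-1-s)))
      (𝓝[>] (1:ℝ)) (𝓝 (-((a+b) * Real.log ((1:ℝ)+1)) + b * (Real.log ((1:ℝ)+1+s) - Real.log ((1:ℝ)-1-s)))) := by
    apply Filter.Tendsto.mono_left _ nhdsWithin_le_nhds
    have c1 : ContinuousAt (fun x : ℝ => Real.log (x+1)) 1 := contAt_log_shift (by norm_num)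
    have c2 : ContinuousAt (fun x : ℝ => Real.log (x+1+s)) 1 := by
      have := contAt_log_shift (c := 1) (d := 1 + s) (by intro h; linarith)
      simpa [add_assoc] using this
    have c3 : ContinuousAt (fun x : ℝ => Real.log (x-1-s)) 1 := by
      have := contAt_log_shift (c := 1) (d := -1 - s) (by intro h; linarith)
      have e : ∀ x : ℝ, x + (-1 - s) = x - 1 - s := fun x => by ring
      simp only [e] at this
      exact this
    have : ContinuousAt (fun x : ℝ =>
        -((a+b) * Real.log (x+1)) + b * (Real.log (x+1+s) - Real.log (x-1-s))) 1 :=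
      ((c1.const_mul _).neg).add ((c2.sub c3).const_mul _)
    exact this.tendsto
  have := hf.atBot_add hg
  apply this.congr
  intro x; rw [hh]; ring

lemma tendsto_hh_onePlus_left (a b s : ℝ) (ha : 0 < a) (hb : 0 < b) (hs : 0 < s) :
    Filter.Tendsto (hh a b s) (𝓝[<] (1+s)) Filter.atTop := by
  have hlog : Filter.Tendsto (fun x => Real.log (x - 1 - s)) (𝓝[<] (1+s)) Filter.atBot := by
    have hsub : Filter.Tendsto (fun x : ℝ => x - 1 - s) (𝓝[<] (1+s)) (𝓝[≠] 0) := by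
      have := tendsto_sub_lt (1+s)
      apply this.congr
      intro x; ring
    exact Real.tendsto_log_nhdsNE_zero.comp hsub
  have hf : Filter.Tendsto (fun x => (-b) * Real.log (x - 1 - s)) (𝓝[<] (1+s)) Filter.atTop :=
    Filter.Tendsto.const_mul_atBot_of_neg (by linarith) hlog
  have hg : Filter.Tendsto
      (fun x => (a+b) * (Real.log (x-1) - Real.log (x+1)) + b * Real.log (x+1+s))
      (𝓝[<] (1+s)) (𝓝 ((a+b) * (Real.log ((1:ℝ)+s-1) - Real.log ((1:ℝ)+s+1)) + b * Real.log ((1:ℝ)+s+1+s))) := by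
    apply Filter.Tendsto.mono_left _ nhdsWithin_le_nhds
    have c1 : ContinuousAt (fun x : ℝ => Real.log (x-1)) (1+s) := by
      have := contAt_log_shift (c := 1+s) (d := -1) (by intro h; linarith)
      have e : ∀ x : ℝ, x + (-1 : ℝ) = x - 1 := fun x => by ring
      simp only [e] at this; exact this
    have c2 : ContinuousAt (fun x : ℝ => Real.log (x+1)) (1+s) :=
      contAt_log_shift (by intro h; linarith)
    have c3 : ContinuousAt (fun x : ℝ => Real.log (x+1+s)) (1+s) := by
      have := contAt_log_shift (c := 1+s) (d := 1 + s) (by intro h; linarith)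
      simpa [add_assoc] using this
    have : ContinuousAt (fun x : ℝ =>
        (a+b) * (Real.log (x-1) - Real.log (x+1)) + b * Real.log (x+1+s)) (1+s) :=
      ((c1.sub c2).const_mul _).add (c3.const_mul _)
    exact this.tendsto
  have := hf.atTop_add hg
  apply this.congr
  intro x; rw [hh]; ring

lemma tendsto_hh_onePlus_right (a b s : ℝ) (ha : 0 < a) (hb : 0 < b) (hs : 0 < s) :
    Filter.Tendsto (hh a b s) (𝓝[>] (1+s)) Filter.atTop := by
  have hlog : Filter.Tendsto (fun x => Real.log (x - 1 - s)) (𝓝[>] (1+s)) Filter.atBot := by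
    have hsub : Filter.Tendsto (fun x : ℝ => x - 1 - s) (𝓝[>] (1+s)) (𝓝[>] 0) := by
      have := tendsto_sub_gt (1+s)
      apply this.congr
      intro x; ring
    exact Real.tendsto_log_nhdsGT_zero.comp hsub
  have hf : Filter.Tendsto (fun x => (-b) * Real.log (x - 1 - s)) (𝓝[>] (1+s)) Filter.atTop :=
    Filter.Tendsto.const_mul_atBot_of_neg (by linarith) hlog
  have hg : Filter.Tendsto
      (fun x => (a+b) * (Real.log (x-1) - Real.log (x+1)) + b * Real.log (x+1+s))
      (𝓝[>] (1+s)) (𝓝 ((a+b) * (Real.log ((1:ℝ)+s-1) - Real.log ((1:ℝ)+s+1)) + b * Real.log ((1:ℝ)+s+1+s))) := by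
    apply Filter.Tendsto.mono_left _ nhdsWithin_le_nhds
    have c1 : ContinuousAt (fun x : ℝ => Real.log (x-1)) (1+s) := by
      have := contAt_log_shift (c := 1+s) (d := -1) (by intro h; linarith)
      have e : ∀ x : ℝ, x + (-1 : ℝ) = x - 1 := fun x => by ring
      simp only [e] at this; exact this
    have c2 : ContinuousAt (fun x : ℝ => Real.log (x+1)) (1+s) :=
      contAt_log_shift (by intro h; linarith)
    have c3 : ContinuousAt (fun x : ℝ => Real.log (x+1+s)) (1+s) := by
      have := contAt_log_shift (c := 1+s) (d := 1 + s) (by intro h; linarith)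
      simpa [add_assoc] using this
    have : ContinuousAt (fun x : ℝ =>
        (a+b) * (Real.log (x-1) - Real.log (x+1)) + b * Real.log (x+1+s)) (1+s) :=
      ((c1.sub c2).const_mul _).add (c3.const_mul _)
    exact this.tendsto
  have := hf.atTop_add hg
  apply this.congr
  intro x; rw [hh]; ring

lemma tendsto_ratio_one (c d : ℝ) :
    Filter.Tendsto (fun x : ℝ => (x + c) / (x + d)) Filter.atTop (𝓝 1) := by
  have h1 : Filter.Tendsto (fun x : ℝ => 1 + (c - d) / (x + d)) Filter.atTop (𝓝 (1 + 0)) := by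
    apply Filter.Tendsto.add tendsto_const_nhds
    exact Filter.Tendsto.div_atTop tendsto_const_nhds
      (Filter.tendsto_atTop_add_const_right _ d Filter.tendsto_id)
  rw [add_zero] at h1
  apply h1.congr'
  filter_upwards [Filter.eventually_gt_atTop (-d)] with x hx
  have hxd : x + d ≠ 0 := by intro h; nlinarith
  field_simp
  ring

lemma tendsto_logdiff (c d : ℝ) :
    Filter.Tendsto (fun x : ℝ => Real.log (x + c) - Real.log (x + d)) Filter.atTop (𝓝 0) := by
  have h2 : Filter.Tendsto (fun x : ℝ => Real.log ((x + c) / (x + d))) Filter.atTop (𝓝 0) := by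
    have := (Real.continuousAt_log (by norm_num : (1:ℝ) ≠ 0)).tendsto.comp (tendsto_ratio_one c d)
    simpa [Function.comp_def] using this
  apply h2.congr'
  filter_upwards [Filter.eventually_gt_atTop (-c), Filter.eventually_gt_atTop (-d)] with x h1 h2
  rw [Real.log_div (by intro h; nlinarith) (by intro h; nlinarith)]

lemma tendsto_hh_atTop (a b s : ℝ) (ha : 0 < a) (hb : 0 < b) (hs : 0 < s) :
    Filter.Tendsto (hh a b s) Filter.atTop (𝓝 0) := by
  have t1 := (tendsto_logdiff (-1) 1).const_mul (a+b)
  have t2 := (tendsto_logdiff (1+s) (-1-s)).const_mul b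
  have := t1.add t2
  rw [mul_zero, mul_zero, add_zero] at this
  apply this.congr
  intro x
  rw [hh]
  have e1 : x + -1 = x - 1 := by ring
  have e2 : x + (1+s) = x + 1 + s := by ring
  have e3 : x + (-1-s) = x - 1 - s := by ring
  rw [e1, e2, e3]

lemma hh_neg_unit (a b s : ℝ) (ha : 0 < a) (hb : 0 < b) (hs : 0 < s) {x : ℝ}
    (hx0 : 0 < x) (hx1 : x < 1) : hh a b s x < 0 := by
  have l1 : Real.log (x - 1) = Real.log (1 - x) := by
    rw [show x - 1 = -(1 - x) by ring, Real.log_neg_eq_log]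
  have l4 : Real.log (x - 1 - s) = Real.log (1 + s - x) := by
    rw [show x - 1 - s = -(1 + s - x) by ring, Real.log_neg_eq_log]
  rw [hh, l1, l4]
  set A := Real.log (1 - x) - Real.log (x + 1) with hA
  have hAneg : A < 0 := by
    have : Real.log (1 - x) < Real.log (x + 1) :=
      Real.log_lt_log (by linarith) (by linarith)
    simp [hA]; linarith
  have hB : Real.log (x + 1 + s) - Real.log (1 + s - x) < -A := by
    have key : Real.log ((x + 1 + s) * (1 - x)) < Real.log ((x + 1) * (1 + s - x)) := by
      apply Real.log_lt_log
      · exact mul_pos (by linarith) (by linarith)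
      · nlinarith
    rw [Real.log_mul (by intro h; nlinarith) (by intro h; nlinarith),
      Real.log_mul (by intro h; nlinarith) (by intro h; nlinarith)] at key
    simp [hA]; linarith
  nlinarith [mul_pos ha (neg_pos.2 hAneg), mul_lt_mul_of_pos_left hB hb]

lemma hh_neg_end (a b s : ℝ) (ha : 0 < a) (hb : 0 < b) (hs : 0 < s) (hsb : s * b < a)
    {x : ℝ} (hx : Real.sqrt (Tc a b s) ≤ x) : hh a b s x < 0 := by
  have mono := strictMonoOn_hh_end a b s ha hb hs hsb
  have le0 : ∀ y, Real.sqrt (Tc a b s) ≤ y → hh a b s y ≤ 0 := by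
    intro y hy
    apply ge_of_tendsto (tendsto_hh_atTop a b s ha hb hs)
    filter_upwards [Filter.eventually_gt_atTop y] with z hz
    exact (mono hy (le_trans hy hz.le) hz).le
  calc hh a b s x < hh a b s (x+1) :=
      mono (Set.mem_Ici.2 hx) (Set.mem_Ici.2 (by linarith)) (by linarith)
    _ ≤ 0 := le0 _ (by linarith)

theorem stmt_16 (a b s : ℝ) (ha : 0 < a) (hb : 0 < b) (hs : 0 < s) (hsb : s * b < a) :
    ∃ η₀ ∈ Set.Ioo (1 : ℝ) (1 + s), ∃ η₁ ∈ Set.Ioi (1 + s),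
      -- uniqueness of η₀ and η₁
      (∀ x ∈ Set.Ioo (1 : ℝ) (1 + s), Hfun a b s x 0 = 0 → x = η₀) ∧
      (∀ x ∈ Set.Ioi (1 + s), Hfun a b s x 0 = 0 → x = η₁) ∧
      -- sign of H(x,0)
      (∀ x : ℝ, 0 < x → x < η₀ → Hfun a b s x 0 < 0) ∧
      (∀ x : ℝ, η₁ < x → Hfun a b s x 0 < 0) ∧
      Hfun a b s η₀ 0 = 0 ∧ Hfun a b s η₁ 0 = 0 ∧
      (∀ x : ℝ, η₀ < x → x < η₁ → 0 < Hfun a b s x 0) ∧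
      -- ∂H/∂x(η₀,0) > 0 and ∂H/∂x(η₁,0) < 0
      0 < deriv (fun x : ℝ => (Hfun a b s x 0).toReal) η₀ ∧
      deriv (fun x : ℝ => (Hfun a b s x 0).toReal) η₁ < 0 := by
  set X := Real.sqrt (Tc a b s) with hXdef
  have hX : 1 + s < X := Xc_gt a b s ha hb hs hsb
  have smid := strictMonoOn_hh_mid a b s ha hb hs
  have santi := strictAntiOn_hh_tail a b s ha hb hs hsb
  -- continuity on the relevant open sets
  have hcont1 : ∀ x ∈ Set.Ioo (1:ℝ) (1+s), ContinuousAt (hh a b s) x := fun x hx =>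
    (hasDerivAt_hh a b s hs (by linarith [hx.1]) (ne_of_gt hx.1) (ne_of_lt hx.2)).continuousAt
  have hcont2 : ∀ x ∈ Set.Ioi (1+s), ContinuousAt (hh a b s) x := fun x hx => by
    have hx1 : 1 + s < x := hx
    exact (hasDerivAt_hh a b s hs (by linarith) (by intro h; nlinarith)
      (ne_of_gt hx1)).continuousAt
  -- find η₀
  obtain ⟨u, hu_neg, hu_mem⟩ : ∃ u, hh a b s u < 0 ∧ u ∈ Set.Ioo (1:ℝ) (1+s) := by
    have h1 : ∀ᶠ x in 𝓝[>] (1:ℝ), hh a b s x < 0 :=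
      (tendsto_hh_one a b s ha hb hs).eventually (Filter.eventually_lt_atBot 0)
    have h2 : Set.Ioo (1:ℝ) (1+s) ∈ 𝓝[>] (1:ℝ) :=
      Ioo_mem_nhdsGT_of_mem ⟨le_refl _, by linarith⟩
    exact (h1.and h2).exists
  obtain ⟨v, hv_pos, hv_mem⟩ : ∃ v, 0 < hh a b s v ∧ v ∈ Set.Ioo u (1+s) := by
    have h1 : ∀ᶠ x in 𝓝[<] (1+s), 0 < hh a b s x :=
      (tendsto_hh_onePlus_left a b s ha hb hs).eventually (Filter.eventually_gt_atTop 0)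
    have h2 : Set.Ioo u (1+s) ∈ 𝓝[<] (1+s) :=
      Ioo_mem_nhdsLT_of_mem ⟨hu_mem.2, le_refl _⟩
    exact (h1.and h2).exists
  have huv : u < v := hv_mem.1
  have hIcc_sub : Set.Icc u v ⊆ Set.Ioo (1:ℝ) (1+s) := fun y hy =>
    ⟨lt_of_lt_of_le hu_mem.1 hy.1, lt_of_le_of_lt hy.2 hv_mem.2⟩
  obtain ⟨η₀, hη₀uv, hη₀zero⟩ :=
    intermediate_value_Ioo huv.le
      (fun y hy => (hcont1 y (hIcc_sub hy)).continuousWithinAt) ⟨hu_neg, hv_pos⟩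
  have hη₀mem : η₀ ∈ Set.Ioo (1:ℝ) (1+s) :=
    ⟨lt_trans hu_mem.1 hη₀uv.1, lt_trans hη₀uv.2 hv_mem.2⟩
  -- find η₁
  obtain ⟨u', hu'_pos, hu'_mem⟩ : ∃ u', 0 < hh a b s u' ∧ u' ∈ Set.Ioo (1+s) X := by
    have h1 : ∀ᶠ x in 𝓝[>] (1+s), 0 < hh a b s x :=
      (tendsto_hh_onePlus_right a b s ha hb hs).eventually (Filter.eventually_gt_atTop 0)
    have h2 : Set.Ioo (1+s) X ∈ 𝓝[>] (1+s) :=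
      Ioo_mem_nhdsGT_of_mem ⟨le_refl _, hX⟩
    exact (h1.and h2).exists
  have hXneg : hh a b s X < 0 := hh_neg_end a b s ha hb hs hsb le_rfl
  have hIcc_sub2 : Set.Icc u' X ⊆ Set.Ioi (1+s) := fun y hy =>
    lt_of_lt_of_le hu'_mem.1 hy.1
  obtain ⟨η₁, hη₁uv, hη₁zero⟩ :=
    intermediate_value_Ioo' hu'_mem.2.le
      (fun y hy => (hcont2 y (hIcc_sub2 hy)).continuousWithinAt) ⟨hXneg, hu'_pos⟩
  have hη₁mem : η₁ ∈ Set.Ioo (1+s) X := ⟨lt_trans hu'_mem.1 hη₁uv.1, hη₁uv.2⟩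
  -- conversion helpers
  have Heq : ∀ x : ℝ, 0 < x → x ≠ 1 → x ≠ 1 + s → Hfun a b s x 0 = ((hh a b s x : ℝ) : EReal) :=
    fun x h1 h2 h3 => Hfun_eq a b s hs h1 h2 h3
  refine ⟨η₀, hη₀mem, η₁, Set.mem_Ioi.2 hη₁mem.1, ?_, ?_, ?_, ?_, ?_, ?_, ?_, ?_, ?_⟩
  · -- uniqueness of η₀
    intro x hx hx0
    have hxne : x ≠ 1 := ne_of_gt hx.1
    have hxne' : x ≠ 1 + s := ne_of_lt hx.2
    rw [Heq x (by linarith [hx.1]) hxne hxne'] at hx0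
    have : hh a b s x = 0 := by exact_mod_cast hx0
    exact smid.injOn hx hη₀mem (by rw [this, hη₀zero])
  · -- uniqueness of η₁
    intro x hx hx0
    have hx1 : 1 + s < x := hx
    rw [Heq x (by linarith) (by intro h; nlinarith) (ne_of_gt hx1)] at hx0
    have hzx : hh a b s x = 0 := by exact_mod_cast hx0
    by_cases hxX : x ≤ X
    · exact santi.injOn ⟨hx1, hxX⟩ ⟨hη₁mem.1, hη₁mem.2.le⟩ (by rw [hzx, hη₁zero])
    · exfalso
      have := hh_neg_end a b s ha hb hs hsb (le_of_lt (not_le.1 hxX))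
      rw [hzx] at this; exact lt_irrefl 0 this
  · -- Hfun < 0 on (0, η₀)
    intro x hx0 hxη
    rcases lt_trichotomy x 1 with h1 | h1 | h1
    · rw [Heq x hx0 (ne_of_lt h1) (by intro h; nlinarith)]
      exact_mod_cast hh_neg_unit a b s ha hb hs hx0 h1
    · rw [h1, Hfun_at_one a b s ha hb hs]
      exact bot_lt_iff_ne_bot.2 (by simp)
    · have hxmem : x ∈ Set.Ioo (1:ℝ) (1+s) := ⟨h1, lt_trans hxη hη₀mem.2⟩
      rw [Heq x hx0 (ne_of_gt h1) (ne_of_lt hxmem.2)]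
      have : hh a b s x < hh a b s η₀ := smid hxmem hη₀mem hxη
      rw [hη₀zero] at this
      exact_mod_cast this
  · -- Hfun < 0 on (η₁, ∞)
    intro x hxη
    have hx1 : 1 + s < x := lt_trans hη₁mem.1 hxη
    have hneg : hh a b s x < 0 := by
      by_cases hxX : x ≤ X
      · have := santi ⟨hη₁mem.1, hη₁mem.2.le⟩ ⟨hx1, hxX⟩ hxη
        rw [hη₁zero] at this; exact this
      · exact hh_neg_end a b s ha hb hs hsb (le_of_lt (not_le.1 hxX))
    rw [Heq x (by linarith) (by intro h; nlinarith) (ne_of_gt hx1)]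
    exact_mod_cast hneg
  · rw [Heq η₀ (by linarith [hη₀mem.1]) (ne_of_gt hη₀mem.1) (ne_of_lt hη₀mem.2), hη₀zero]
    rfl
  · rw [Heq η₁ (by have := hη₁mem.1; linarith) (by have := hη₁mem.1; intro h; nlinarith)
      (ne_of_gt hη₁mem.1), hη₁zero]
    rfl
  · -- Hfun > 0 on (η₀, η₁)
    intro x hx0 hx1
    rcases lt_trichotomy x (1+s) with h1 | h1 | h1
    · have hxmem : x ∈ Set.Ioo (1:ℝ) (1+s) := ⟨lt_trans hη₀mem.1 hx0, h1⟩
      rw [Heq x (by linarith [hxmem.1]) (ne_of_gt hxmem.1) (ne_of_lt h1)]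
      have : hh a b s η₀ < hh a b s x := smid hη₀mem hxmem hx0
      rw [hη₀zero] at this
      exact_mod_cast this
    · rw [h1, Hfun_at_onePlus a b s ha hb hs]
      exact lt_top_iff_ne_top.2 (by simp)
    · have hxmem : x ∈ Set.Ioc (1+s) X := ⟨h1, le_trans hx1.le hη₁mem.2.le⟩
      rw [Heq x (by linarith) (by intro h; nlinarith) (ne_of_gt h1)]
      have : hh a b s η₁ < hh a b s x := santi hxmem ⟨hη₁mem.1, hη₁mem.2.le⟩ hx1
      rw [hη₁zero] at this
      exact_mod_cast this
  · -- deriv at η₀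
    have hev : (fun x : ℝ => (Hfun a b s x 0).toReal) =ᶠ[𝓝 η₀] hh a b s := by
      filter_upwards [isOpen_Ioo.mem_nhds hη₀mem] with x hx
      rw [Heq x (by linarith [hx.1]) (ne_of_gt hx.1) (ne_of_lt hx.2)]
      exact EReal.toReal_coe _
    rw [hev.deriv_eq,
      (hasDerivAt_hh a b s hs (by linarith [hη₀mem.1]) (ne_of_gt hη₀mem.1)
        (ne_of_lt hη₀mem.2)).deriv]
    exact hh'_pos_mid a b s ha hb hs hη₀mem
  · -- deriv at η₁
    have hop : Set.Ioi (1+s) ∈ 𝓝 η₁ := isOpen_Ioi.mem_nhds hη₁mem.1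
    have hev : (fun x : ℝ => (Hfun a b s x 0).toReal) =ᶠ[𝓝 η₁] hh a b s := by
      filter_upwards [hop] with x hx
      have hx1 : 1 + s < x := hx
      rw [Heq x (by linarith) (by intro h; nlinarith) (ne_of_gt hx1)]
      exact EReal.toReal_coe _
    rw [hev.deriv_eq,
      (hasDerivAt_hh a b s hs (by have := hη₁mem.1; linarith)
        (by have := hη₁mem.1; intro h; nlinarith) (ne_of_gt hη₁mem.1)).deriv]
    exact hh'_neg_tail a b s ha hb hs hsb hη₁mem
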